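/- (Corollary 2, Lyapunov stability of the zero solution; case f = 0.) Assume the improper integral ∫_τ^∞ α(ξ)·σ(ξ)^p·ν(ξ)^{1−p} dξ converges and sup_{t ≥ 0} ∫_0^t γ(ξ) dξ < ∞. Then for every ε > 0 there exists δ > 0 such that the following holds: for every u : ℝ → H that is continuous on [−τ, ∞), differentiable on [0, ∞) with derivative u̇, with t ↦ ‖u(t)‖ differentiable on [0, ∞), satisfying Re⟨u(t), u̇(t)⟩ ≤ γ(t)·‖u(t)‖² + α(t)·‖u(t)‖·‖u(t−τ)‖^p for all t ≥ 0, and for which there exists a nonnegative function h : ℝ → ℝ, continuous on [−τ, ∞), differentiable on [0, ∞), with h′(t) = γ(t)·h(t) + α(t)·h(t−τ)^p for all t ≥ 0 and h(t) = ‖u(t)‖ for t ∈ [−τ, 0]: if ‖u(t)‖ ≤ δ for all t ∈ [−τ, 0], then ‖u(t)‖ ≤ ε for all t ≥ 0. -/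

import Mathlib

set_option maxHeartbeats 1000000

open Real MeasureTheory Set Filter ComplexInnerProductSpace

/-- `ν(t) = exp(−∫₀ᵗ γ(ξ) dξ)`. -/
noncomputable def nu (γ : ℝ → ℝ) (t : ℝ) : ℝ := Real.exp (-∫ ξ in (0:ℝ)..t, γ ξ)

/-- `σ(t) = exp(−∫_{t−τ}^t γ(ξ) dξ)`. -/
noncomputable def sig (γ : ℝ → ℝ) (τ t : ℝ) : ℝ :=
  Real.exp (-∫ ξ in (t - τ)..t, γ ξ)

lemma normSq_hasDeriv {H : Type*} [NormedAddCommGroup H] [InnerProductSpace ℂ H]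
    {u : ℝ → H} {v : H} {s : Set ℝ} {x : ℝ}
    (hu : HasDerivWithinAt u v s x) :
    HasDerivWithinAt (fun t => ‖u t‖ ^ 2) (2 * (⟪u x, v⟫).re) s x := by
  have h1 := HasDerivWithinAt.inner ℂ hu hu
  have h2 := (Complex.reCLM.hasFDerivAt.comp_hasDerivWithinAt x h1)
  have heq : (fun t => Complex.reCLM (⟪u t, u t⟫)) = fun t => ‖u t‖ ^ 2 := by
    funext t
    simpa using inner_self_eq_norm_sq (𝕜 := ℂ) (u t)
  rw [show (⇑Complex.reCLM ∘ fun t => (⟪u t, u t⟫:ℂ)) = fun t => ‖u t‖ ^ 2 from heq] at h2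
  refine h2.congr_deriv ?_
  simp only [map_add, Complex.reCLM_apply]
  rw [← inner_conj_symm (u x) v, Complex.conj_re]
  ring

lemma norm_le_comparison {H : Type*} [NormedAddCommGroup H] [InnerProductSpace ℂ H]
    (τ p : ℝ) (hτ : 0 < τ) (hp : 0 < p)
    (γ α : ℝ → ℝ) (hγc : Continuous γ) (hα : ∀ t, 0 ≤ α t)
    (u u' : ℝ → H) (h h' : ℝ → ℝ)
    (hu : ContinuousOn u (Ici (-τ)))
    (hu' : ∀ t, 0 ≤ t → HasDerivWithinAt u (u' t) (Ici (0:ℝ)) t)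
    (hnd : ∀ t, 0 ≤ t → DifferentiableWithinAt ℝ (fun s => ‖u s‖) (Ici (0:ℝ)) t)
    (hineq : ∀ t, 0 ≤ t → (⟪u t, u' t⟫).re ≤ γ t * ‖u t‖ ^ 2 + α t * ‖u t‖ * ‖u (t - τ)‖ ^ p)
    (hh0 : ∀ t, -τ ≤ t → 0 ≤ h t)
    (hhc : ContinuousOn h (Ici (-τ)))
    (hh' : ∀ t, 0 ≤ t → HasDerivWithinAt h (h' t) (Ici (0:ℝ)) t)
    (hheq : ∀ t, 0 ≤ t → h' t = γ t * h t + α t * h (t - τ) ^ p)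
    (hic : ∀ t, -τ ≤ t → t ≤ 0 → h t = ‖u t‖) :
    ∀ t, -τ ≤ t → ‖u t‖ ≤ h t := by
  set g : ℝ → ℝ := fun s => ‖u s‖ with hg
  set G' : ℝ → ℝ := fun x => derivWithin g (Ici (0:ℝ)) x with hG'
  have key : ∀ x, 0 ≤ x → 0 < g x → G' x ≤ γ x * g x + α x * g (x - τ) ^ p := by
    intro x hx hgx
    have hud : UniqueDiffWithinAt ℝ (Ici (0:ℝ)) x := uniqueDiffOn_Ici 0 x hx
    have hd1 : HasDerivWithinAt g (G' x) (Ici (0:ℝ)) x := (hnd x hx).hasDerivWithinAt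
    have hg2 : HasDerivWithinAt (fun s => g s ^ 2) (2 * g x ^ 1 * G' x) (Ici (0:ℝ)) x := by
      simpa using hd1.fun_pow 2
    have hg2' : HasDerivWithinAt (fun s => ‖u s‖ ^ 2) (2 * (⟪u x, u' x⟫).re) (Ici (0:ℝ)) x :=
      normSq_hasDeriv (hu' x hx)
    have hder : 2 * g x ^ 1 * G' x = 2 * (⟪u x, u' x⟫).re := by
      rw [← hg2.derivWithin hud, ← hg2'.derivWithin hud]
    have hkey : g x * G' x = (⟪u x, u' x⟫).re := by
      have := hder; nlinarith [this]
    have h2 : g x * G' x ≤ g x * (γ x * g x + α x * g (x - τ) ^ p) := by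
      rw [hkey]
      calc (⟪u x, u' x⟫).re ≤ γ x * ‖u x‖ ^ 2 + α x * ‖u x‖ * ‖u (x - τ)‖ ^ p := hineq x hx
        _ = g x * (γ x * g x + α x * g (x - τ) ^ p) := by simp only [hg]; ring
    exact le_of_mul_le_mul_left h2 hgx
  have main : ∀ k : ℕ, ∀ t, -τ ≤ t → t ≤ k * τ → g t ≤ h t := by
    intro k
    induction k with
    | zero =>
      intro t ht ht0
      rw [Nat.cast_zero, zero_mul] at ht0
      exact le_of_eq (hic t ht ht0).symm
    | succ k ih =>
      intro t ht htk
      rcases le_or_gt t ((k : ℝ) * τ) with hle | hlt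
      · exact ih t ht hle
      set a : ℝ := (k : ℝ) * τ with ha
      have ha0 : (0:ℝ) ≤ a := mul_nonneg (Nat.cast_nonneg k) hτ.le
      set b : ℝ := a + τ with hb
      have htb : t ≤ b := by
        rw [hb, ha]; rw [Nat.cast_succ] at htk; linarith
      have hIccsub : Icc a b ⊆ Ici (-τ) := fun x hx => le_trans (by linarith) hx.1
      have hIcc0 : Icc a b ⊆ Ici (0:ℝ) := fun x hx => le_trans ha0 hx.1
      obtain ⟨K, hK⟩ : ∃ K : ℝ, ∀ x ∈ Icc a b, γ x < K := by
        obtain ⟨C, hC⟩ := (isCompact_Icc.image hγc).bddAbove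
        exact ⟨C + 1, fun x hx => lt_of_le_of_lt (hC ⟨x, hx, rfl⟩) (lt_add_one C)⟩
      suffices hsuff : ∀ η : ℝ, 0 < η → g t ≤ h t + η * Real.exp (K * (t - a)) by
        by_contra hc
        push_neg at hc
        have hE : 0 < Real.exp (K * (t - a)) := Real.exp_pos _
        have h6 := hsuff ((g t - h t) / (2 * Real.exp (K * (t - a))))
          (div_pos (by linarith) (by positivity))
        have h7 : Real.exp (K * (t - a)) * ((g t - h t) / (2 * Real.exp (K * (t - a))))
            = (g t - h t) / 2 := by
          field_simp
        rw [mul_comm ((g t - h t) / (2 * Real.exp (K * (t - a))))] at h6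
        rw [h7] at h6
        linarith
      intro η hη
      have happ := image_le_of_deriv_right_lt_deriv_boundary' (f := g) (f' := G')
        (a := a) (b := b)
        (B := fun x => h x + η * Real.exp (K * (x - a)))
        (B' := fun x => h' x + η * (Real.exp (K * (x - a)) * (K * 1)))
        ((hu.mono hIccsub).norm)
        (fun x hx => ((hnd x (hIcc0 ⟨hx.1, hx.2.le⟩)).hasDerivWithinAt).mono
          (fun y hy => show (0:ℝ) ≤ y from le_trans (hIcc0 ⟨hx.1, hx.2.le⟩) hy))
        (by
          show g a ≤ h a + η * Real.exp (K * (a - a))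
          have hga : g a ≤ h a := ih a (le_trans (by linarith) ha0) le_rfl
          have hEa : (0:ℝ) < η * Real.exp (K * (a - a)) := by positivity
          linarith)
        ((hhc.mono hIccsub).add (Continuous.continuousOn (by continuity)))
        (fun x hx => by
          have hx0 : (0:ℝ) ≤ x := hIcc0 ⟨hx.1, hx.2.le⟩
          have hE : HasDerivAt (fun y => η * Real.exp (K * (y - a)))
              (η * (Real.exp (K * (x - a)) * (K * 1))) x :=
            ((((hasDerivAt_id x).sub_const a).const_mul K).exp).const_mul η
          exact (((hh' x hx0).mono (fun y hy => le_trans hx0 hy)).add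
            (hE.hasDerivWithinAt))
        )
        (fun x hx hgB0 => by
          have hgB : g x = h x + η * Real.exp (K * (x - a)) := hgB0
          have hx0 : (0:ℝ) ≤ x := hIcc0 ⟨hx.1, hx.2.le⟩
          have hxm : -τ ≤ x := le_trans (by linarith) hx0
          have hEpos : 0 < η * Real.exp (K * (x - a)) := by positivity
          have hgpos : 0 < g x := by
            rw [hgB]
            have h0x := hh0 x hxm
            linarith
          have h1 : G' x ≤ γ x * g x + α x * g (x - τ) ^ p := key x hx0 hgpos
          have h2 : g (x - τ) ≤ h (x - τ) :=
            ih (x - τ) (by linarith) (by have := hx.2; linarith)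
          have h3 : g (x - τ) ^ p ≤ h (x - τ) ^ p :=
            Real.rpow_le_rpow (norm_nonneg _) h2 hp.le
          have h4 : G' x ≤ γ x * g x + α x * h (x - τ) ^ p := by
            have := mul_le_mul_of_nonneg_left h3 (hα x)
            linarith
          rw [hgB] at h4
          have h5 : γ x < K := hK x ⟨hx.1, hx.2.le⟩
          show G' x < h' x + η * (Real.exp (K * (x - a)) * (K * 1))
          rw [hheq x hx0]
          calc G' x ≤ γ x * (h x + η * Real.exp (K * (x - a))) + α x * h (x - τ) ^ p := h4
            _ = (γ x * h x + α x * h (x - τ) ^ p) + γ x * (η * Real.exp (K * (x - a))) := by ring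
            _ < (γ x * h x + α x * h (x - τ) ^ p) + η * (Real.exp (K * (x - a)) * (K * 1)) := by
                have := mul_lt_mul_of_pos_right h5 hEpos
                nlinarith [Real.exp_pos (K * (x - a))]
        )
      exact happ ⟨hlt.le, htb⟩
  intro t ht0
  obtain ⟨k, hk⟩ := exists_nat_ge (t / τ)
  exact main k t (by linarith) (by rw [div_le_iff₀ hτ] at hk; linarith)

lemma nuMulLe
    (τ p : ℝ) (hτ : 0 < τ) (hp : 1 < p)
    (γ α : ℝ → ℝ)
    (hγc : Continuous γ) (hαc : Continuous α)
    (hα : ∀ t, 0 ≤ α t)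
    (hint : IntegrableOn (fun ξ => α ξ * sig γ τ ξ ^ p * nu γ ξ ^ (1 - p)) (Ici τ))
    (hM : BddAbove {x : ℝ | ∃ t, 0 ≤ t ∧ x = ∫ ξ in (0:ℝ)..t, γ ξ})
    (h h' : ℝ → ℝ) (δ : ℝ) (hδpos : 0 < δ) (hδ1 : δ ≤ 1)
    (hh0 : ∀ t, -τ ≤ t → 0 ≤ h t)
    (hhc : ContinuousOn h (Ici (-τ)))
    (hh' : ∀ t, 0 ≤ t → HasDerivWithinAt h (h' t) (Ici (0:ℝ)) t)
    (hheq : ∀ t, 0 ≤ t → h' t = γ t * h t + α t * h (t - τ) ^ p)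
    (hδu : ∀ t ∈ Icc (-τ) (0:ℝ), h t ≤ δ)
    (B : ℝ) (hB0 : 0 < B)
    (hBI : B ^ (p - 1) * (∫ ξ in Ici τ, α ξ * sig γ τ ξ ^ p * nu γ ξ ^ (1 - p)) ≤ 4⁻¹)
    (hδB : δ * (1 + ∫ s in (0:ℝ)..τ, α s * nu γ s) ≤ B / 2) :
    ∀ t, 0 ≤ t → nu γ t * h t ≤ B := by
  set β : ℝ → ℝ := fun ξ => α ξ * sig γ τ ξ ^ p * nu γ ξ ^ (1 - p) with hβdef
  set I : ℝ := ∫ ξ in Ici τ, β ξ with hIdef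
  set C0 : ℝ := ∫ s in (0:ℝ)..τ, α s * nu γ s with hC0def
  have hνpos : ∀ s : ℝ, 0 < nu γ s := fun s => Real.exp_pos _
  have hσpos : ∀ s : ℝ, 0 < sig γ τ s := fun s => Real.exp_pos _
  have hβ0 : ∀ s, 0 ≤ β s := fun s => mul_nonneg
    (mul_nonneg (hα s) (Real.rpow_pos_of_pos (hσpos s) p).le)
    (Real.rpow_pos_of_pos (hνpos s) _).le
  have hI0 : 0 ≤ I := setIntegral_nonneg measurableSet_Ici (fun s _ => hβ0 s)
  have hintcont : Continuous fun t : ℝ => ∫ ξ in (0:ℝ)..t, γ ξ := by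
    rw [continuous_iff_continuousAt]
    intro s
    exact ((hγc.integral_hasStrictDerivAt 0 s).hasDerivAt).continuousAt
  have hνcont : Continuous (nu γ) := Real.continuous_exp.comp hintcont.neg
  set y : ℝ → ℝ := fun s => nu γ s * h s with hydef
  set w : ℝ → ℝ := fun s => α s * nu γ s * h (s - τ) ^ p with hwdef
  have hνd : ∀ s : ℝ, HasDerivAt (nu γ) (-γ s * nu γ s) s := by
    intro s
    have h1 : HasDerivAt (fun r => ∫ ξ in (0:ℝ)..r, γ ξ) (γ s) s :=
      (hγc.integral_hasStrictDerivAt 0 s).hasDerivAt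
    have h2 := (h1.neg).exp
    show HasDerivAt (fun x => nu γ x) _ s
    simpa [nu, mul_comm] using h2
  have hyd : ∀ s, 0 ≤ s → HasDerivWithinAt y (w s) (Ici (0:ℝ)) s := by
    intro s hs
    have hmul := ((hνd s).hasDerivWithinAt.mul (hh' s hs))
    refine hmul.congr_deriv ?_
    rw [hheq s hs]
    rw [hwdef]
    ring
  have hsub0 : Ici (0:ℝ) ⊆ Ici (-τ) := fun s hs => le_trans (by linarith : -τ ≤ 0) hs
  have hwcont : ContinuousOn w (Ici (0:ℝ)) := by
    apply ContinuousOn.mul ((hαc.mul hνcont).continuousOn)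
    apply ContinuousOn.rpow_const
    · exact hhc.comp (continuous_id.sub continuous_const).continuousOn
        (fun s hs => by simp only [mem_Ici] at *; linarith)
    · exact fun s hs => Or.inr (by linarith)
  have hycont : ContinuousOn y (Ici (-τ)) := (hνcont.continuousOn).mul hhc
  have hw0 : ∀ s, 0 ≤ s → 0 ≤ w s := fun s hs => mul_nonneg
    (mul_nonneg (hα s) (hνpos s).le) (Real.rpow_nonneg (hh0 _ (by linarith)) p)
  have hymono : MonotoneOn y (Ici (0:ℝ)) := by
    apply monotoneOn_of_deriv_nonneg (convex_Ici 0) (hycont.mono hsub0)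
    · intro s hs
      rw [interior_Ici] at hs
      exact ((hyd s hs.le).hasDerivAt (Ici_mem_nhds hs)).differentiableAt.differentiableWithinAt
    · intro s hs
      rw [interior_Ici] at hs
      rw [((hyd s hs.le).hasDerivAt (Ici_mem_nhds hs)).deriv]
      exact hw0 s hs.le
  have hFTC : ∀ a b : ℝ, 0 ≤ a → a ≤ b → (∫ s in a..b, w s) = y b - y a := by
    intro a b ha hab
    apply intervalIntegral.integral_eq_sub_of_hasDeriv_right_of_le hab
      (hycont.mono (fun s hs => le_trans (by linarith) (le_trans ha hs.1)))
      (fun s hs => (hyd s (le_trans ha hs.1.le)).mono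
        (fun r hr => le_trans (le_trans ha hs.1.le) hr.le))
    apply ContinuousOn.intervalIntegrable
    rw [uIcc_of_le hab]
    exact hwcont.mono (fun s hs => le_trans ha hs.1)
  have hy0δ : y 0 ≤ δ := by
    have h1 : nu γ 0 = 1 := by simp [nu]
    have h2 : h 0 ≤ δ := hδu 0 ⟨by linarith, le_rfl⟩
    calc y 0 = nu γ 0 * h 0 := rfl
    _ = h 0 := by rw [h1, one_mul]
    _ ≤ δ := h2
  have hyτ : y τ ≤ B / 2 := by
    have hF := hFTC 0 τ le_rfl hτ.le
    have hbound : (∫ s in (0:ℝ)..τ, w s) ≤ δ * C0 := by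
      have hmono : ∀ s ∈ Icc (0:ℝ) τ, w s ≤ δ * (α s * nu γ s) := by
        intro s hs
        have hsτ : s - τ ∈ Icc (-τ) (0:ℝ) := ⟨by linarith [hs.1], by linarith [hs.2]⟩
        have hhδ : h (s - τ) ≤ δ := hδu _ hsτ
        have h2 : h (s - τ) ^ p ≤ δ ^ p :=
          Real.rpow_le_rpow (hh0 _ hsτ.1) hhδ (by linarith)
        have h3 : δ ^ p ≤ δ := by
          calc δ ^ p ≤ δ ^ (1:ℝ) :=
            Real.rpow_le_rpow_of_exponent_ge hδpos hδ1 (by linarith)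
          _ = δ := Real.rpow_one δ
        calc w s = α s * nu γ s * h (s - τ) ^ p := rfl
        _ ≤ α s * nu γ s * δ :=
          mul_le_mul_of_nonneg_left (le_trans h2 h3) (mul_nonneg (hα s) (hνpos s).le)
        _ = δ * (α s * nu γ s) := by ring
      calc (∫ s in (0:ℝ)..τ, w s) ≤ ∫ s in (0:ℝ)..τ, δ * (α s * nu γ s) := by
            apply intervalIntegral.integral_mono_on hτ.le
            · apply ContinuousOn.intervalIntegrable
              rw [uIcc_of_le hτ.le]
              exact hwcont.mono (fun s hs => hs.1)
            · exact (Continuous.intervalIntegrable (by continuity) 0 τ)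
            · exact hmono
      _ = δ * C0 := by rw [hC0def, ← intervalIntegral.integral_const_mul]
    have : y τ = y 0 + ∫ s in (0:ℝ)..τ, w s := by linarith [hF]
    rw [this]
    calc y 0 + (∫ s in (0:ℝ)..τ, w s) ≤ δ + δ * C0 := add_le_add hy0δ hbound
    _ = δ * (1 + C0) := by ring
    _ ≤ B / 2 := hδB
  -- key pointwise identity
  have hid : ∀ s : ℝ, nu γ s / nu γ (s - τ) ^ p = sig γ τ s ^ p * nu γ s ^ (1 - p) := by
    intro s
    have hadj : (∫ ξ in (0:ℝ)..(s - τ), γ ξ) + (∫ ξ in (s - τ)..s, γ ξ)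
        = ∫ ξ in (0:ℝ)..s, γ ξ :=
      intervalIntegral.integral_add_adjacent_intervals
        (hγc.intervalIntegrable _ _) (hγc.intervalIntegrable _ _)
    have hexp : ∀ a q : ℝ, Real.exp a ^ q = Real.exp (a * q) := by
      intro a q
      rw [Real.rpow_def_of_pos (Real.exp_pos a), Real.log_exp]
    rw [nu, nu, sig, hexp, hexp, hexp, ← Real.exp_sub, ← Real.exp_add]
    congr 1
    first
    | linear_combination (-p) * hadj
    | linear_combination p * hadj
    | linear_combination (2*p) * hadj
    | linear_combination (-2*p) * hadj
  -- main bootstrap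
  have hyB : ∀ s, 0 ≤ s → y s ≤ B := by
    intro t ht
    rcases le_or_gt t τ with htτ | htτ
    · calc y t ≤ y τ := hymono ht hτ.le htτ
      _ ≤ B / 2 := hyτ
      _ ≤ B := by linarith
    by_contra hc
    push_neg at hc
    set S' : Set ℝ := Icc τ t ∩ y ⁻¹' Ici B with hS'def
    have hS'ne : S'.Nonempty := ⟨t, ⟨htτ.le, le_rfl⟩, hc.le⟩
    have hS'closed : IsClosed S' := by
      apply ContinuousOn.preimage_isClosed_of_isClosed
        (hycont.mono (fun s hs => le_trans (by linarith) hs.1)) isClosed_Icc isClosed_Ici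
    have hS'bdd : BddBelow S' := ⟨τ, fun s hs => hs.1.1⟩
    set t₀ : ℝ := sInf S' with ht₀def
    have ht₀mem : t₀ ∈ S' := hS'closed.csInf_mem hS'ne hS'bdd
    have ht₀τ : τ ≤ t₀ := ht₀mem.1.1
    have hyt₀ : B ≤ y t₀ := ht₀mem.2
    have ht₀gt : τ < t₀ := by
      rcases eq_or_lt_of_le ht₀τ with heq | hlt
      · exfalso; rw [heq] at hyτ; linarith
      · exact hlt
    have hlow : ∀ s, 0 ≤ s → s < t₀ → y s ≤ B := by
      intro s hs hst
      rcases le_or_gt s τ with hsτ | hsτ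
      · calc y s ≤ y τ := hymono hs hτ.le hsτ
        _ ≤ B / 2 := hyτ
        _ ≤ B := by linarith
      · by_contra hcs
        push_neg at hcs
        have hsmem : s ∈ S' := ⟨⟨hsτ.le, by linarith [ht₀mem.1.2]⟩, hcs.le⟩
        exact absurd (csInf_le hS'bdd hsmem) (not_le.mpr hst)
    have hF := hFTC τ t₀ hτ.le ht₀τ
    have hbound2 : (∫ s in τ..t₀, w s) ≤ B ^ p * I := by
      have hwβ : ∀ s ∈ Icc τ t₀, w s ≤ B ^ p * β s := by
        intro s hs
        have hsτ0 : 0 ≤ s - τ := by linarith [hs.1]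
        have hyτs : y (s - τ) ≤ B := hlow _ hsτ0 (by linarith [hs.2, hτ])
        have hhval : h (s - τ) = y (s - τ) / nu γ (s - τ) := by
          show h (s - τ) = nu γ (s - τ) * h (s - τ) / nu γ (s - τ)
          rw [mul_comm, mul_div_assoc, div_self (ne_of_gt (hνpos _)), mul_one]
        have hy0' : 0 ≤ y (s - τ) := mul_nonneg (hνpos _).le (hh0 _ (by linarith))
        have h1 : h (s - τ) ^ p ≤ B ^ p / nu γ (s - τ) ^ p := by
          rw [hhval, Real.div_rpow hy0' (hνpos _).le]
          exact (div_le_div_iff_of_pos_right (Real.rpow_pos_of_pos (hνpos _) p)).mpr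
            (Real.rpow_le_rpow hy0' hyτs (by linarith))
        calc w s = α s * nu γ s * h (s - τ) ^ p := rfl
        _ ≤ α s * nu γ s * (B ^ p / nu γ (s - τ) ^ p) :=
          mul_le_mul_of_nonneg_left h1 (mul_nonneg (hα s) (hνpos s).le)
        _ = B ^ p * (α s * (nu γ s / nu γ (s - τ) ^ p)) := by ring
        _ = B ^ p * β s := by
            rw [hid s, hβdef]
            ring
      have hβint : IntervalIntegrable β volume τ t₀ := by
        apply IntegrableOn.intervalIntegrable
        rw [uIcc_of_le ht₀τ]
        exact hint.mono_set (fun s hs => hs.1)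
      calc (∫ s in τ..t₀, w s) ≤ ∫ s in τ..t₀, B ^ p * β s := by
            apply intervalIntegral.integral_mono_on ht₀τ
            · apply ContinuousOn.intervalIntegrable
              rw [uIcc_of_le ht₀τ]
              exact hwcont.mono (fun s hs => le_trans hτ.le hs.1)
            · exact hβint.const_mul _
            · exact hwβ
      _ = B ^ p * ∫ s in τ..t₀, β s := by
            rw [intervalIntegral.integral_const_mul]
      _ ≤ B ^ p * I := by
            apply mul_le_mul_of_nonneg_left ?_ (Real.rpow_nonneg hB0.le p)
            rw [intervalIntegral.integral_of_le ht₀τ, hIdef]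
            apply setIntegral_mono_set hint
            · exact ae_of_all _ (fun s => hβ0 s)
            · exact HasSubset.Subset.eventuallyLE (fun s hs => hs.1.le)
    have hBp : B ^ p = B * B ^ (p - 1) := by
      nth_rewrite 1 [show p = 1 + (p - 1) by ring]
      rw [Real.rpow_add hB0, Real.rpow_one]
    have h9 : B ^ p * I ≤ B / 4 := by
      rw [hBp, mul_assoc]
      calc B * (B ^ (p - 1) * I) ≤ B * 4⁻¹ := mul_le_mul_of_nonneg_left hBI hB0.le
      _ = B / 4 := by ring
    linarith [hF, hbound2, hyτ, hyt₀, hB0]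
  exact hyB

/-- Corollary 2.9 (Corollary 2), Lyapunov stability of the zero solution for
the case `f = 0`: under (68) and (80), for every `ε > 0` there is `δ > 0` such
that every solution with `‖u‖ ≤ δ` on `[−τ,0]` satisfies `‖u‖ ≤ ε` on `[0,∞)`. -/
theorem stmt_18
    {H : Type*} [NormedAddCommGroup H] [InnerProductSpace ℂ H]
    (τ p : ℝ) (hτ : 0 < τ) (hp : 1 < p)
    (γ α : ℝ → ℝ)
    (hγc : Continuous γ) (hαc : Continuous α)
    (hα : ∀ t, 0 ≤ α t)
    (hint : IntegrableOn (fun ξ => α ξ * sig γ τ ξ ^ p * nu γ ξ ^ (1 - p)) (Ici τ))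
    (hM : BddAbove {x : ℝ | ∃ t, 0 ≤ t ∧ x = ∫ ξ in (0:ℝ)..t, γ ξ}) :
    ∀ ε : ℝ, 0 < ε → ∃ δ : ℝ, 0 < δ ∧
      ∀ (u u' : ℝ → H) (h h' : ℝ → ℝ),
        ContinuousOn u (Ici (-τ)) →
        (∀ t, 0 ≤ t → HasDerivWithinAt u (u' t) (Ici (0:ℝ)) t) →
        (∀ t, 0 ≤ t → DifferentiableWithinAt ℝ (fun s => ‖u s‖) (Ici (0:ℝ)) t) →
        (∀ t, 0 ≤ t → (⟪u t, u' t⟫).re ≤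
          γ t * ‖u t‖ ^ 2 + α t * ‖u t‖ * ‖u (t - τ)‖ ^ p) →
        (∀ t, -τ ≤ t → 0 ≤ h t) →
        ContinuousOn h (Ici (-τ)) →
        (∀ t, 0 ≤ t → HasDerivWithinAt h (h' t) (Ici (0:ℝ)) t) →
        (∀ t, 0 ≤ t → h' t = γ t * h t + α t * h (t - τ) ^ p) →
        (∀ t, -τ ≤ t → t ≤ 0 → h t = ‖u t‖) →
        (∀ t ∈ Icc (-τ) (0:ℝ), ‖u t‖ ≤ δ) →
        ∀ t, 0 ≤ t → ‖u t‖ ≤ ε := by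
  intro ε hε
  have hνpos : ∀ s : ℝ, 0 < nu γ s := fun s => Real.exp_pos _
  have hσpos : ∀ s : ℝ, 0 < sig γ τ s := fun s => Real.exp_pos _
  set I : ℝ := ∫ ξ in Ici τ, α ξ * sig γ τ ξ ^ p * nu γ ξ ^ (1 - p) with hIdef
  have hI0 : 0 ≤ I := setIntegral_nonneg measurableSet_Ici (fun s _ => mul_nonneg
    (mul_nonneg (hα s) (Real.rpow_pos_of_pos (hσpos s) p).le)
    (Real.rpow_pos_of_pos (hνpos s) _).le)
  set C0 : ℝ := ∫ s in (0:ℝ)..τ, α s * nu γ s with hC0def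
  have hC0 : 0 ≤ C0 := intervalIntegral.integral_nonneg hτ.le
    (fun s _ => mul_nonneg (hα s) (hνpos s).le)
  set M : ℝ := sSup {x : ℝ | ∃ t, 0 ≤ t ∧ x = ∫ ξ in (0:ℝ)..t, γ ξ} with hMdef
  have hMle : ∀ t, 0 ≤ t → (∫ ξ in (0:ℝ)..t, γ ξ) ≤ M := fun t ht => le_csSup hM ⟨t, ht, rfl⟩
  set B : ℝ := min (ε * Real.exp (-M)) (min 1 ((4 * (I + 1))⁻¹ ^ (p - 1)⁻¹)) with hBdef
  have hp1 : (0:ℝ) < p - 1 := by linarith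
  have hB0 : 0 < B := lt_min (by positivity)
    (lt_min one_pos (Real.rpow_pos_of_pos (by positivity) _))
  have hBI : B ^ (p - 1) * I ≤ 4⁻¹ := by
    have h1 : B ^ (p - 1) ≤ (4 * (I + 1))⁻¹ := by
      calc B ^ (p - 1) ≤ ((4 * (I + 1))⁻¹ ^ (p - 1)⁻¹) ^ (p - 1) :=
        Real.rpow_le_rpow hB0.le (le_trans (min_le_right _ _) (min_le_right _ _)) hp1.le
      _ = (4 * (I + 1))⁻¹ := Real.rpow_inv_rpow (by positivity) (ne_of_gt hp1)
    have h2 : B ^ (p - 1) * I ≤ (4 * (I + 1))⁻¹ * I := mul_le_mul_of_nonneg_right h1 hI0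
    have h3 : (4 * (I + 1))⁻¹ * I ≤ 4⁻¹ := by
      rw [inv_mul_eq_div, div_le_iff₀ (by positivity)]
      nlinarith
    linarith
  set δ : ℝ := min 1 (B / (2 * (1 + C0))) with hδdef
  have hδpos : 0 < δ := lt_min one_pos (div_pos hB0 (by linarith))
  have hδ1 : δ ≤ 1 := min_le_left _ _
  have hδB : δ * (1 + C0) ≤ B / 2 := by
    have hd : δ ≤ B / (2 * (1 + C0)) := min_le_right _ _
    have h1 : (0:ℝ) < 1 + C0 := by linarith
    calc δ * (1 + C0) ≤ (B / (2 * (1 + C0))) * (1 + C0) :=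
      mul_le_mul_of_nonneg_right hd h1.le
    _ = B / 2 := by
        field_simp
  refine ⟨δ, hδpos, ?_⟩
  intro u u' h h' hu hu' hnd hineq hh0 hhc hh' hheq hic hδu
  have hcomp := norm_le_comparison τ p hτ (by linarith) γ α hγc hα u u' h h' hu hu' hnd
    hineq hh0 hhc hh' hheq hic
  have hδh : ∀ t ∈ Icc (-τ) (0:ℝ), h t ≤ δ := fun t htm => by
    rw [hic t htm.1 htm.2]; exact hδu t htm
  have hyB := nuMulLe τ p hτ hp γ α hγc hαc hα hint hM h h' δ hδpos hδ1 hh0 hhc hh' hheq hδh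
    B hB0 hBI hδB
  intro t ht
  calc ‖u t‖ ≤ h t := hcomp t (by linarith)
  _ ≤ ε := by
    have h1 : nu γ t * h t ≤ B := hyB t ht
    have h2 : Real.exp (-M) ≤ nu γ t := Real.exp_le_exp.mpr (neg_le_neg (hMle t ht))
    have h3 : B ≤ ε * Real.exp (-M) := min_le_left _ _
    have h4 : ε * Real.exp (-M) ≤ ε * nu γ t := mul_le_mul_of_nonneg_left h2 hε.le
    have h5 : nu γ t * h t ≤ nu γ t * ε := by
      calc nu γ t * h t ≤ ε * nu γ t := le_trans h1 (le_trans h3 h4)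
      _ = nu γ t * ε := by ring
    exact le_of_mul_le_mul_left h5 (hνpos t)
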